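/- Let μ, ν be probability measures on a finite set A with μ positive everywhere, let ρ > 0, and suppose the relative entropy satisfies H(ν|μ) + 2/e ≤ ρ² . Then the set G = {a ∈ A : e^{−ρ} ν({a}) ≤ μ({a}) ≤ e^{ρ} ν({a})} satisfies ν(G) ≥ 1 − ρ. -/

import Mathlib

open scoped Classical

/-- `x * log x ≥ -1/e` for `x > 0`. -/
lemma mul_log_ge_neg_inv_exp {x : ℝ} (hx : 0 < x) :
    -(Real.exp 1)⁻¹ ≤ x * Real.log x := by
  have h := Real.log_le_sub_one_of_pos (show (0:ℝ) < (Real.exp 1 * x)⁻¹ by positivity)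
  rw [Real.log_inv, Real.log_mul (Real.exp_ne_zero 1) hx.ne', Real.log_exp] at h
  have h2 : -Real.log x ≤ (Real.exp 1 * x)⁻¹ := by linarith
  have h3 : x * (-Real.log x) ≤ x * (Real.exp 1 * x)⁻¹ :=
    mul_le_mul_of_nonneg_left h2 hx.le
  have h4 : x * (Real.exp 1 * x)⁻¹ = (Real.exp 1)⁻¹ := by
    rw [mul_inv, ← mul_assoc, mul_comm x, mul_assoc, mul_inv_cancel₀ hx.ne', mul_one]
  rw [h4] at h3
  nlinarith

theorem small_relative_entropy_implies_good_set
    {A : Type*} [Fintype A] (ν μ : A → ℝ)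
    (hν0 : ∀ a, 0 ≤ ν a) (hμ0 : ∀ a, 0 < μ a)
    (hν1 : ∑ a, ν a = 1) (hμ1 : ∑ a, μ a = 1)
    (ρ : ℝ) (hρ : 0 < ρ)
    (hH : (∑ a, ν a * Real.log (ν a / μ a)) + 2 / Real.exp 1 ≤ ρ ^ 2) :
    1 - ρ ≤ ∑ a ∈ Finset.univ.filter
      (fun a => Real.exp (-ρ) * ν a ≤ μ a ∧ μ a ≤ Real.exp ρ * ν a), ν a := by
  set G := Finset.univ.filter
      (fun a => Real.exp (-ρ) * ν a ≤ μ a ∧ μ a ≤ Real.exp ρ * ν a) with hG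
  -- pointwise bound: ν |log(ν/μ)| ≤ ν log(ν/μ) + 2 μ / e
  have key1 : ∀ a, ν a * |Real.log (ν a / μ a)| ≤
      ν a * Real.log (ν a / μ a) + 2 * (μ a / Real.exp 1) := by
    intro a
    have hμe : 0 ≤ μ a / Real.exp 1 := div_nonneg (hμ0 a).le (Real.exp_pos 1).le
    rcases eq_or_lt_of_le (hν0 a) with h0 | h0
    · simp [← h0]
      linarith
    · rcases abs_cases (Real.log (ν a / μ a)) with ⟨he, _⟩ | ⟨he, _⟩
      · rw [he]
        linarith
      · rw [he]
        have ht : 0 < ν a / μ a := div_pos h0 (hμ0 a)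
        have := mul_log_ge_neg_inv_exp ht
        have h5 : -(Real.exp 1)⁻¹ * μ a ≤ (ν a / μ a) * Real.log (ν a / μ a) * μ a :=
          mul_le_mul_of_nonneg_right this (hμ0 a).le
        have h6 : (ν a / μ a) * Real.log (ν a / μ a) * μ a = ν a * Real.log (ν a / μ a) := by
          field_simp
          rw [mul_comm, mul_div_assoc, div_self (hμ0 a).ne', mul_one]
        rw [h6] at h5
        have h8 : -(Real.exp 1)⁻¹ * μ a = -(μ a / Real.exp 1) := by ring
        rw [h8] at h5
        linarith
  -- Markov pointwise on the complement of G
  have key2 : ∀ a ∈ Gᶜ, ρ * ν a ≤ ν a * |Real.log (ν a / μ a)| := by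
    intro a ha
    rw [Finset.mem_compl, hG, Finset.mem_filter] at ha
    push_neg at ha
    rcases eq_or_lt_of_le (hν0 a) with h0 | h0
    · simp [← h0]
    · have ht : 0 < ν a / μ a := div_pos h0 (hμ0 a)
      have hcase := ha (Finset.mem_univ a)
      have hbound : ρ ≤ |Real.log (ν a / μ a)| := by
        by_cases h1 : Real.exp (-ρ) * ν a ≤ μ a
        · -- then exp ρ * ν a < μ a
          have h2 := hcase h1
          have h3 : ν a / μ a < Real.exp (-ρ) := by
            rw [div_lt_iff₀ (hμ0 a)]
            have := mul_lt_mul_of_pos_left h2 (Real.exp_pos (-ρ))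
            rw [← mul_assoc, ← Real.exp_add, neg_add_cancel, Real.exp_zero, one_mul] at this
            linarith
          have h4 : Real.log (ν a / μ a) < -ρ := by
            have := Real.log_lt_log ht h3
            rwa [Real.log_exp] at this
          rw [abs_of_neg (by linarith : Real.log (ν a / μ a) < 0)]
          linarith
        · push_neg at h1
          have h3 : Real.exp ρ < ν a / μ a := by
            rw [lt_div_iff₀ (hμ0 a)]
            have := mul_lt_mul_of_pos_left h1 (Real.exp_pos ρ)
            rw [← mul_assoc, ← Real.exp_add, add_neg_cancel, Real.exp_zero, one_mul] at this
            linarith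
          have h4 : ρ < Real.log (ν a / μ a) := by
            have := Real.log_lt_log (Real.exp_pos ρ) h3
            rwa [Real.log_exp] at this
          rw [abs_of_pos (by linarith : 0 < Real.log (ν a / μ a))]
          linarith
      calc ρ * ν a = ν a * ρ := by ring
        _ ≤ ν a * |Real.log (ν a / μ a)| := mul_le_mul_of_nonneg_left hbound (hν0 a)
  -- chain of inequalities
  have step1 : ρ * ∑ a ∈ Gᶜ, ν a ≤ ∑ a ∈ Gᶜ, ν a * |Real.log (ν a / μ a)| := by
    rw [Finset.mul_sum]
    exact Finset.sum_le_sum key2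
  have step2 : ∑ a ∈ Gᶜ, ν a * |Real.log (ν a / μ a)| ≤
      ∑ a, ν a * |Real.log (ν a / μ a)| := by
    apply Finset.sum_le_sum_of_subset_of_nonneg (Finset.subset_univ _)
    intro a _ _
    exact mul_nonneg (hν0 a) (abs_nonneg _)
  have step3 : ∑ a, ν a * |Real.log (ν a / μ a)| ≤
      (∑ a, ν a * Real.log (ν a / μ a)) + 2 / Real.exp 1 := by
    have h9 : ∑ a, ν a * |Real.log (ν a / μ a)| ≤
        ∑ a, (ν a * Real.log (ν a / μ a) + 2 * (μ a / Real.exp 1)) :=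
      Finset.sum_le_sum fun a _ => key1 a
    rw [Finset.sum_add_distrib] at h9
    have h7 : ∑ a, 2 * (μ a / Real.exp 1) = 2 / Real.exp 1 := by
      rw [← Finset.mul_sum, ← Finset.sum_div, hμ1]
      ring
    linarith
  have hcompl : ∑ a ∈ Gᶜ, ν a ≤ ρ := by
    nlinarith [step1, step2, step3, hH, hρ]
  have hsplit : ∑ a ∈ G, ν a + ∑ a ∈ Gᶜ, ν a = 1 := by
    rw [Finset.sum_add_sum_compl, hν1]
  linarith
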